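/- Consider two agents in R^m with dynamics ṗ₁ = -(z₁₂ - z₁₂*) and ṗ₂ = a z₁₂ - z₁₂* where z₁₂ = p₁ - p₂, a > 0, and z₁₂* is a fixed target. Then z₁₂(t) → 2 z₁₂*/(a+1) and both ṗ₁(t), ṗ₂(t) → ((a-1)/(a+1)) z₁₂* as t → ∞; in particular, if a ≠ 1 the agents converge to a distorted relative position and move forever with a common nonzero residual velocity (when z₁₂* ≠ 0). -/

import Mathlib

open Filter Topology

/-- Two agents where agent 2 mismeasures the relative position by scale `a > 0`:
`z₁₂(t) → 2z₁₂*/(a+1)` and both velocities converge to `((a-1)/(a+1)) z₁₂*`. -/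
theorem stmt8 (m : ℕ) (a : ℝ) (ha : 0 < a) (zstar : Fin m → ℝ)
    (p₁ p₂ : ℝ → Fin m → ℝ)
    (hp₁ : ∀ t : ℝ, HasDerivAt p₁ (-((p₁ t - p₂ t) - zstar)) t)
    (hp₂ : ∀ t : ℝ, HasDerivAt p₂ (a • (p₁ t - p₂ t) - zstar) t) :
    Tendsto (fun t : ℝ => p₁ t - p₂ t) atTop (𝓝 ((2 / (a + 1)) • zstar)) ∧
    Tendsto (fun t : ℝ => -((p₁ t - p₂ t) - zstar)) atTop
      (𝓝 (((a - 1) / (a + 1)) • zstar)) ∧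
    Tendsto (fun t : ℝ => a • (p₁ t - p₂ t) - zstar) atTop
      (𝓝 (((a - 1) / (a + 1)) • zstar)) := by
  have ha1 : a + 1 ≠ 0 := by linarith
  set c : Fin m → ℝ := (2 / (a + 1)) • zstar with hc
  set z : ℝ → Fin m → ℝ := fun t => p₁ t - p₂ t with hz
  set w : ℝ → Fin m → ℝ := fun t => z t - c with hw
  have hcc : (a + 1) • c = (2 : ℝ) • zstar := by
    rw [hc, smul_smul]
    congr 1
    field_simp
  have hw' : ∀ t, HasDerivAt w ((-(a + 1)) • w t) t := by
    intro t
    have h := ((hp₁ t).sub (hp₂ t)).sub_const c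
    convert h using 1
    iterate 4 rfl
    funext i
    simp only [hw, hz, hc, Pi.smul_apply, Pi.sub_apply, Pi.neg_apply, smul_eq_mul]
    field_simp
    ring
  set g : ℝ → Fin m → ℝ := fun t => Real.exp ((a + 1) * t) • w t with hg
  have hg' : ∀ t, HasDerivAt g 0 t := by
    intro t
    have he : HasDerivAt (fun t : ℝ => Real.exp ((a + 1) * t))
        ((a + 1) * Real.exp ((a + 1) * t)) t := by
      simpa [mul_comm] using ((hasDerivAt_id t).const_mul (a + 1)).exp
    have := he.smul (hw' t)
    convert this using 1
    iterate 4 rfl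
    simp only [smul_smul]
    module
  have hconst : ∀ t, g t = g 0 := by
    intro t
    have hdiff : Differentiable ℝ g := fun t => (hg' t).differentiableAt
    have hderiv : ∀ t, deriv g t = 0 := fun t => (hg' t).deriv
    exact is_const_of_deriv_eq_zero hdiff hderiv t 0
  have hwt : ∀ t, w t = Real.exp (-((a + 1) * t)) • w 0 := by
    intro t
    have h := hconst t
    simp only [hg] at h
    have : Real.exp (-((a + 1) * t)) • (Real.exp ((a + 1) * t) • w t)
        = Real.exp (-((a + 1) * t)) • (Real.exp ((a + 1) * 0) • w 0) := by rw [h]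
    simpa [smul_smul, ← Real.exp_add] using this
  have hexp : Tendsto (fun t : ℝ => Real.exp (-((a + 1) * t))) atTop (𝓝 0) := by
    apply Real.tendsto_exp_atBot.comp
    apply tendsto_neg_atTop_atBot.comp
    exact Tendsto.const_mul_atTop (by linarith) tendsto_id
  have hw0 : Tendsto w atTop (𝓝 0) := by
    have := hexp.smul_const (w 0)
    simp only [zero_smul] at this
    exact this.congr fun t => (hwt t).symm
  have hzc : Tendsto z atTop (𝓝 c) := by
    have := hw0.add_const c
    simpa [hw, sub_add_cancel] using this
  refine ⟨hzc, ?_, ?_⟩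
  · have h := ((hzc.sub_const zstar).neg)
    convert h using 2
    funext i
    simp only [hc, Pi.smul_apply, Pi.sub_apply, Pi.neg_apply, smul_eq_mul]
    field_simp
    ring
  · have h := ((hzc.const_smul a).sub_const zstar)
    convert h using 2
    funext i
    simp only [hc, Pi.smul_apply, Pi.sub_apply, smul_eq_mul]
    field_simp
    ring
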